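/- Let 1 < α ≤ 2, let M ≥ 2 be an integer, and let C be the (M−1)×(M−1) Toeplitz matrix with entries C_{ij} = c_{i−j}^(α), where c_k^(α) are the fractional centered difference coefficients. Then every eigenvalue λ of C satisfies 0 < λ < 2 c_0^(α). -/

import Mathlib

/-- The fractional centered difference coefficients
`c_k^(α) = (−1)^k Γ(α+1) / (Γ(α/2 − k + 1) Γ(α/2 + k + 1))`,
interpreted as `0` when one of the Gamma arguments is a nonpositive integer. -/
noncomputable def fracCoeff (α : ℝ) (k : ℤ) : ℝ :=
  (-1 : ℝ) ^ k * Real.Gamma (α + 1) /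
    (Real.Gamma (α / 2 - k + 1) * Real.Gamma (α / 2 + k + 1))


open Finset

lemma fracCoeff_neg (α : ℝ) (k : ℤ) : fracCoeff α (-k) = fracCoeff α k := by
  unfold fracCoeff
  have h1 : ((-1 : ℝ)) ^ k * (-1) ^ k = 1 := by
    rw [← mul_zpow]; norm_num
  have h : ((-1 : ℝ)) ^ (-k) = (-1) ^ k := by
    rw [zpow_neg]; exact inv_eq_of_mul_eq_one_right h1
  rw [h, show α / 2 - ((-k : ℤ) : ℝ) + 1 = α / 2 + (k : ℤ) + 1 by push_cast; ring,
    show α / 2 + ((-k : ℤ) : ℝ) + 1 = α / 2 - (k : ℤ) + 1 by push_cast; ring]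
  ring

lemma fracCoeff_zero_pos {α : ℝ} (hα1 : 0 < α) : 0 < fracCoeff α 0 := by
  unfold fracCoeff
  simp only [Int.cast_zero, zpow_zero, one_mul, sub_zero, add_zero]
  have h1 := Real.Gamma_pos_of_pos (by linarith : (0:ℝ) < α + 1)
  have h2 := Real.Gamma_pos_of_pos (by linarith : (0:ℝ) < α / 2 + 1)
  positivity

lemma fracCoeff_one_neg {α : ℝ} (hα1 : 1 < α) : fracCoeff α 1 < 0 := by
  unfold fracCoeff
  have e1 : α / 2 - ((1 : ℤ) : ℝ) + 1 = α / 2 := by push_cast; ring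
  have e2 : α / 2 + ((1 : ℤ) : ℝ) + 1 = α / 2 + 2 := by push_cast; ring
  rw [e1, e2]
  have h1 := Real.Gamma_pos_of_pos (by linarith : (0:ℝ) < α + 1)
  have h2 := Real.Gamma_pos_of_pos (by linarith : (0:ℝ) < α / 2)
  have h3 := Real.Gamma_pos_of_pos (by linarith : (0:ℝ) < α / 2 + 2)
  have : ((-1 : ℝ)) ^ (1 : ℤ) = -1 := by norm_num
  rw [this]
  have hnum : (-1 : ℝ) * Real.Gamma (α + 1) < 0 := by nlinarith
  exact div_neg_of_neg_of_pos hnum (by positivity)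

lemma Gamma_prod (x : ℝ) : ∀ k : ℕ, (∀ j : ℕ, j < k → x - j ≠ 0) →
    Real.Gamma (x + 1) = (∏ j ∈ range k, (x - j)) * Real.Gamma (x - k + 1) := by
  intro k
  induction k with
  | zero => intro _; simp
  | succ k ih =>
    intro h
    have hk : x - k ≠ 0 := h k (Nat.lt_succ_self k)
    have hrec : Real.Gamma (x - k + 1) = (x - k) * Real.Gamma (x - k) := Real.Gamma_add_one hk
    rw [ih (fun j hj => h j (hj.trans (Nat.lt_succ_self k))), hrec, prod_range_succ]
    have : x - ((k : ℕ) + 1 : ℕ) + 1 = x - k := by push_cast; ring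
    rw [this]; ring

section alphalt

variable {α : ℝ} (hα1 : 1 < α) (hα2 : α < 2)

include hα1 hα2 in
lemma half_ne (j : ℕ) : α / 2 - j ≠ 0 := by
  rcases Nat.eq_zero_or_pos j with rfl | hj
  · simp; intro h; linarith
  · have : (1 : ℝ) ≤ j := by exact_mod_cast hj
    intro h; linarith

include hα1 hα2 in
lemma prod_sign : ∀ k : ℕ, 0 < (-1 : ℝ) ^ k * ∏ j ∈ range (k + 1), (α / 2 - j) := by
  intro k
  induction k with
  | zero => simp; linarith
  | succ k ih =>
    rw [prod_range_succ, pow_succ]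
    have hneg : α / 2 - ((k : ℕ) + 1 : ℕ) < 0 := by
      have : (1 : ℝ) ≤ ((k : ℕ) + 1 : ℕ) := by exact_mod_cast Nat.succ_pos k
      linarith
    nlinarith

include hα1 hα2 in
lemma Gamma_ne_int (m : ℕ) : ∀ j : ℕ, α / 2 - m ≠ -(j : ℝ) := by
  intro j h
  have h1 : α / 2 = (m : ℝ) - j := by linarith
  rcases le_or_gt m j with hmj | hmj
  · have : (m : ℝ) ≤ j := by exact_mod_cast hmj
    linarith
  · have : (j : ℝ) + 1 ≤ m := by exact_mod_cast hmj
    linarith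

include hα1 hα2 in
lemma Gamma_shift (k : ℕ) :
    Real.Gamma (α / 2 + 1) = (∏ j ∈ range k, (α / 2 - j)) * Real.Gamma (α / 2 - k + 1) :=
  Gamma_prod (α / 2) k (fun j _ => half_ne hα1 hα2 j)

include hα1 hα2 in
lemma fracCoeff_succ_neg (m : ℕ) : fracCoeff α ((m : ℤ) + 1) < 0 := by
  set k := m + 1 with hk
  have hP := prod_sign hα1 hα2 m
  set P := ∏ j ∈ range k, (α / 2 - j) with hPdef
  have hPne : P ≠ 0 := by
    intro h; rw [h] at hP; simp at hP
  have hG := Gamma_shift hα1 hα2 k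
  have hG1 : (0 : ℝ) < Real.Gamma (α / 2 + 1) := Real.Gamma_pos_of_pos (by linarith)
  have hGk : (0 : ℝ) < Real.Gamma (α / 2 + k + 1) := Real.Gamma_pos_of_pos (by positivity)
  have hGa : (0 : ℝ) < Real.Gamma (α + 1) := Real.Gamma_pos_of_pos (by linarith)
  have hu : Real.Gamma (α / 2 - k + 1) = Real.Gamma (α / 2 + 1) / P := by
    rw [hG]; exact (mul_div_cancel_left₀ _ hPne).symm
  unfold fracCoeff
  have e0 : ((-1 : ℝ)) ^ ((m : ℤ) + 1) = (-1 : ℝ) ^ k := by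
    rw [show ((m : ℤ) + 1) = ((k : ℕ) : ℤ) by omega, zpow_natCast]
  have e1 : α / 2 - (((m : ℤ) + 1 : ℤ) : ℝ) + 1 = α / 2 - (k : ℕ) + 1 := by push_cast [hk] <;> ring
  have e2 : α / 2 + (((m : ℤ) + 1 : ℤ) : ℝ) + 1 = α / 2 + (k : ℕ) + 1 := by push_cast [hk] <;> ring
  rw [e0, e1, e2, hu]
  have hkm : (-1 : ℝ) ^ k = -((-1 : ℝ) ^ m) := by rw [hk, pow_succ]; ring
  rw [hkm]
  have key : -(-1 : ℝ) ^ m * Real.Gamma (α + 1) / (Real.Gamma (α / 2 + 1) / P * Real.Gamma (α / 2 + ↑k + 1))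
      = -(((-1 : ℝ) ^ m * P) * Real.Gamma (α + 1)) / (Real.Gamma (α / 2 + 1) * Real.Gamma (α / 2 + ↑k + 1)) := by
    field_simp
  rw [key]
  apply div_neg_of_neg_of_pos
  · nlinarith
  · positivity

end alphalt

noncomputable def gTel (α : ℝ) (k : ℕ) : ℝ :=
  -(Real.Gamma α) * (-1) ^ k / (Real.Gamma (α / 2 - k + 1) * Real.Gamma (α / 2 + k))

section alphalt2

variable {α : ℝ} (hα1 : 1 < α) (hα2 : α < 2)

include hα1 hα2 in
lemma tele (m : ℕ) : fracCoeff α ((m : ℤ) + 1) = gTel α (m + 2) - gTel α (m + 1) := by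
  set k : ℕ := m + 1 with hk
  have hA : α / 2 - (k : ℝ) ≠ 0 := half_ne hα1 hα2 k
  have hGA : Real.Gamma (α / 2 - (k : ℝ)) ≠ 0 :=
    Real.Gamma_ne_zero (Gamma_ne_int hα1 hα2 k)
  have hvpos : (0 : ℝ) < Real.Gamma (α / 2 + k) := Real.Gamma_pos_of_pos (by positivity)
  have hv : Real.Gamma (α / 2 + (k : ℝ)) ≠ 0 := ne_of_gt hvpos
  have hB : α / 2 + (k : ℝ) ≠ 0 := by positivity
  have hu : Real.Gamma (α / 2 - (k : ℝ) + 1) = (α / 2 - k) * Real.Gamma (α / 2 - k) :=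
    Real.Gamma_add_one hA
  have hw : Real.Gamma (α / 2 + (k : ℝ) + 1) = (α / 2 + k) * Real.Gamma (α / 2 + k) :=
    Real.Gamma_add_one hB
  have ha : Real.Gamma (α + 1) = α * Real.Gamma α := Real.Gamma_add_one (by linarith)
  unfold fracCoeff gTel
  have e0 : ((-1 : ℝ)) ^ ((m : ℤ) + 1) = (-1 : ℝ) ^ k := by
    rw [show ((m : ℤ) + 1) = ((k : ℕ) : ℤ) by omega, zpow_natCast]
  have e1 : α / 2 - (((m : ℤ) + 1 : ℤ) : ℝ) + 1 = α / 2 - (k : ℕ) + 1 := by push_cast [hk] <;> ring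
  have e2 : α / 2 + (((m : ℤ) + 1 : ℤ) : ℝ) + 1 = α / 2 + (k : ℕ) + 1 := by push_cast [hk] <;> ring
  have e3 : α / 2 - ((m + 2 : ℕ) : ℝ) + 1 = α / 2 - (k : ℝ) := by push_cast [hk] <;> ring
  have e4 : α / 2 + ((m + 2 : ℕ) : ℝ) = α / 2 + (k : ℝ) + 1 := by push_cast [hk] <;> ring
  have e5 : α / 2 - ((m + 1 : ℕ) : ℝ) + 1 = α / 2 - (k : ℝ) + 1 := by push_cast [hk] <;> ring
  have e6 : α / 2 + ((m + 1 : ℕ) : ℝ) = α / 2 + (k : ℝ) := by push_cast [hk] <;> ring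
  have e7 : ((-1 : ℝ)) ^ (m + 2) = (-1 : ℝ) ^ k * (-1) := by
    rw [hk]; ring
  have e8 : ((-1 : ℝ)) ^ (m + 1) = (-1 : ℝ) ^ k := by rw [hk]
  rw [e0, e1, e2, e3, e4, e5, e6, e7, e8, hu, hw, ha]
  have d1 : Real.Gamma (α / 2 - (k:ℝ)) * ((α / 2 + (k:ℝ)) * Real.Gamma (α / 2 + (k:ℝ))) ≠ 0 :=
    mul_ne_zero hGA (mul_ne_zero hB hv)
  have d2 : ((α / 2 - (k:ℝ)) * Real.Gamma (α / 2 - (k:ℝ))) * Real.Gamma (α / 2 + (k:ℝ)) ≠ 0 :=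
    mul_ne_zero (mul_ne_zero hA hGA) hv
  have d3 : ((α / 2 - (k:ℝ)) * Real.Gamma (α / 2 - (k:ℝ))) * ((α / 2 + (k:ℝ)) * Real.Gamma (α / 2 + (k:ℝ))) ≠ 0 :=
    mul_ne_zero (mul_ne_zero hA hGA) (mul_ne_zero hB hv)
  rw [div_sub_div _ _ d1 d2, div_eq_div_iff d3 (mul_ne_zero d1 d2)]
  ring

include hα1 in
lemma g_one : gTel α 1 = fracCoeff α 0 / 2 := by
  unfold gTel fracCoeff
  have e1 : α / 2 - ((1 : ℕ) : ℝ) + 1 = α / 2 := by push_cast; ring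
  have e2 : α / 2 + ((1 : ℕ) : ℝ) = α / 2 + 1 := by push_cast; ring
  have e3 : α / 2 - ((0 : ℤ) : ℝ) + 1 = α / 2 + 1 := by push_cast; ring
  have e4 : α / 2 + ((0 : ℤ) : ℝ) + 1 = α / 2 + 1 := by push_cast; ring
  have ha : Real.Gamma (α + 1) = α * Real.Gamma α := Real.Gamma_add_one (by linarith)
  have hh : Real.Gamma (α / 2 + 1) = (α / 2) * Real.Gamma (α / 2) := by
    exact Real.Gamma_add_one (show (α / 2 : ℝ) ≠ 0 by positivity)
  have h2 : (0 : ℝ) < Real.Gamma (α / 2) := Real.Gamma_pos_of_pos (by linarith)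
  rw [e1, e2, e3, e4, ha, hh]
  simp only [pow_one, zpow_zero]
  field_simp

include hα1 hα2 in
lemma g_nonneg (m : ℕ) : 0 ≤ gTel α (m + 1) := by
  have hP := prod_sign hα1 hα2 m
  set P := ∏ j ∈ range (m + 1), (α / 2 - j) with hPdef
  have hPne : P ≠ 0 := by intro h; rw [h] at hP; simp at hP
  have hG := Gamma_shift hα1 hα2 (m + 1)
  have hu : Real.Gamma (α / 2 - ((m + 1 : ℕ) : ℝ) + 1) = Real.Gamma (α / 2 + 1) / P := by
    rw [hG]; exact (mul_div_cancel_left₀ _ hPne).symm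
  have hG1 : (0 : ℝ) < Real.Gamma (α / 2 + 1) := Real.Gamma_pos_of_pos (by linarith)
  have hGa : (0 : ℝ) < Real.Gamma α := Real.Gamma_pos_of_pos (by linarith)
  have hGm : (0 : ℝ) < Real.Gamma (α / 2 + ((m + 1 : ℕ) : ℝ)) :=
    Real.Gamma_pos_of_pos (by positivity)
  unfold gTel
  rw [hu]
  have e7 : ((-1 : ℝ)) ^ (m + 1) = (-1 : ℝ) ^ m * (-1) := by ring
  rw [e7]
  have key : -Real.Gamma α * ((-1 : ℝ) ^ m * -1) / (Real.Gamma (α / 2 + 1) / P * Real.Gamma (α / 2 + ((m + 1 : ℕ) : ℝ)))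
      = (Real.Gamma α * ((-1 : ℝ) ^ m * P)) / (Real.Gamma (α / 2 + 1) * Real.Gamma (α / 2 + ((m + 1 : ℕ) : ℝ))) := by
    field_simp
  rw [key]
  positivity

include hα1 hα2 in
lemma sum_tele (m : ℕ) :
    ∑ k ∈ range m, fracCoeff α ((k : ℤ) + 1) = gTel α (m + 1) - gTel α 1 := by
  have h := Finset.sum_range_sub (f := fun k => gTel α (k + 1)) m
  rw [← h]
  exact Finset.sum_congr rfl fun k _ => by simpa using tele hα1 hα2 k

end alphalt2

lemma fc2_zero : fracCoeff 2 0 = 2 := by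
  unfold fracCoeff
  rw [show ((0:ℤ):ℝ) = 0 by norm_num, show (2:ℝ)/2 - 0 + 1 = 2 by norm_num,
    show (2:ℝ)/2 + 0 + 1 = 2 by norm_num, show (2:ℝ) + 1 = 2 + 1 by norm_num,
    Real.Gamma_add_one (two_ne_zero), Real.Gamma_two]
  norm_num

lemma fc2_one : fracCoeff 2 1 = -1 := by
  unfold fracCoeff
  rw [show ((1:ℤ):ℝ) = 1 by norm_num, show (2:ℝ)/2 - 1 + 1 = 1 by norm_num,
    show (2:ℝ)/2 + 1 + 1 = 2 + 1 by norm_num,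
    Real.Gamma_add_one (two_ne_zero), Real.Gamma_one, Real.Gamma_two]
  norm_num

lemma fc2_succ (k : ℕ) : fracCoeff 2 ((k : ℤ) + 2) = 0 := by
  unfold fracCoeff
  rw [show (2:ℝ)/2 - (((k:ℤ) + 2 : ℤ) : ℝ) + 1 = -(k:ℝ) by push_cast; ring,
    Real.Gamma_neg_nat_eq_zero, zero_mul, div_zero]

lemma fracCoeff_nonpos {α : ℝ} (hα1 : 1 < α) (hα2 : α ≤ 2) (m : ℕ) :
    fracCoeff α ((m : ℤ) + 1) ≤ 0 := by
  rcases lt_or_eq_of_le hα2 with h | rfl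
  · exact le_of_lt (fracCoeff_succ_neg hα1 h m)
  · cases m with
    | zero => simp [fc2_one]
    | succ j =>
      rw [show ((j + 1 : ℕ) : ℤ) + 1 = (j : ℤ) + 2 by push_cast; ring, fc2_succ]

lemma fracCoeff_nonpos_int {α : ℝ} (hα1 : 1 < α) (hα2 : α ≤ 2) {z : ℤ} (hz : z ≠ 0) :
    fracCoeff α z ≤ 0 := by
  rcases hz.lt_or_gt with h | h
  · obtain ⟨m, rfl⟩ : ∃ m : ℕ, z = -((m : ℤ) + 1) := ⟨(-z - 1).toNat, by omega⟩
    rw [fracCoeff_neg]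
    exact fracCoeff_nonpos hα1 hα2 m
  · obtain ⟨m, rfl⟩ : ∃ m : ℕ, z = (m : ℤ) + 1 := ⟨(z - 1).toNat, by omega⟩
    exact fracCoeff_nonpos hα1 hα2 m

lemma fracCoeff_one_neg' {α : ℝ} (hα1 : 1 < α) : fracCoeff α (-1) < 0 := by
  rw [show (-1 : ℤ) = -(1:ℤ) by norm_num, fracCoeff_neg]
  exact fracCoeff_one_neg hα1

lemma sum_lb {α : ℝ} (hα1 : 1 < α) (hα2 : α ≤ 2) (m : ℕ) :
    -(fracCoeff α 0) / 2 ≤ ∑ k ∈ range m, fracCoeff α ((k : ℤ) + 1) := by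
  rcases lt_or_eq_of_le hα2 with h | rfl
  · rw [sum_tele hα1 h m, g_one hα1]
    have := g_nonneg hα1 h m
    linarith
  · have hval : ∀ m : ℕ, ∑ k ∈ range m, fracCoeff 2 ((k : ℤ) + 1)
        = if m = 0 then 0 else -1 := by
      intro m
      induction m with
      | zero => simp
      | succ n ih =>
        rw [Finset.sum_range_succ, ih]
        cases n with
        | zero => simp [fc2_one]
        | succ j =>
          rw [show ((j + 1 : ℕ) : ℤ) + 1 = (j : ℤ) + 2 by push_cast; ring, fc2_succ]
          simp
    rw [hval, fc2_zero]
    split <;> norm_num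

lemma quad_id {n : ℕ} (A : Matrix (Fin n) (Fin n) ℝ) (hA : ∀ i j, A i j = A j i)
    (x : Fin n → ℝ) (s : ℝ) (hs : s * s = 1) :
    ∑ i, ∑ j, A i j * x i * x j
      = s * ∑ i, (∑ j, A i j) * x i ^ 2
        - (s / 2) * ∑ i, ∑ j, A i j * (x i - s * x j) ^ 2 := by
  have hswap : ∑ i, ∑ j, A i j * x j ^ 2 = ∑ i, ∑ j, A i j * x i ^ 2 := by
    rw [Finset.sum_comm]
    exact Finset.sum_congr rfl fun i _ => Finset.sum_congr rfl fun j _ => by rw [hA j i]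
  have expand : ∑ i, ∑ j, A i j * (x i - s * x j) ^ 2
      = 2 * (∑ i, ∑ j, A i j * x i ^ 2) - 2 * s * (∑ i, ∑ j, A i j * x i * x j) := by
    calc ∑ i, ∑ j, A i j * (x i - s * x j) ^ 2
        = ∑ i, ∑ j, (A i j * x i ^ 2 + A i j * x j ^ 2 - 2 * s * (A i j * x i * x j)) :=
          Finset.sum_congr rfl fun i _ => Finset.sum_congr rfl fun j _ => by
            linear_combination A i j * x j ^ 2 * hs
      _ = (∑ i, ∑ j, A i j * x i ^ 2) + (∑ i, ∑ j, A i j * x j ^ 2)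
            - 2 * s * (∑ i, ∑ j, A i j * x i * x j) := by
          simp [Finset.sum_add_distrib, Finset.sum_sub_distrib, Finset.mul_sum]
      _ = 2 * (∑ i, ∑ j, A i j * x i ^ 2) - 2 * s * (∑ i, ∑ j, A i j * x i * x j) := by
          rw [hswap]; ring
  have hrow : ∑ i, (∑ j, A i j) * x i ^ 2 = ∑ i, ∑ j, A i j * x i ^ 2 :=
    Finset.sum_congr rfl fun i _ => Finset.sum_mul _ _ _
  rw [expand, hrow]
  set L := ∑ i, ∑ j, A i j * x i * x j with hL
  set T := ∑ i, ∑ j, A i j * x i ^ 2 with hT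
  linear_combination (-L) * hs

lemma vanish {n : ℕ} (hn : 0 < n) (x : Fin n → ℝ) (s : ℝ)
    (h0 : x ⟨0, hn⟩ = 0)
    (hstep : ∀ (m : ℕ) (h : m + 1 < n), x ⟨m + 1, h⟩ = s * x ⟨m, by omega⟩) : x = 0 := by
  have key : ∀ m : ℕ, ∀ h : m < n, x ⟨m, h⟩ = 0 := by
    intro m
    induction m with
    | zero => intro h; exact h0
    | succ k ih => intro h; rw [hstep k h, ih (by omega)]; ring
  funext i
  simpa using key i.val i.isLt

lemma pos_form {n : ℕ} (hn : 0 < n) (r : Fin n → ℝ) (b : Fin n → Fin n → ℝ)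
    (hr : ∀ i, 0 ≤ r i) (hr0 : 0 < r ⟨0, hn⟩) (hb : ∀ i j, 0 ≤ b i j)
    (hb1 : ∀ (m : ℕ) (h : m + 1 < n), 0 < b ⟨m, by omega⟩ ⟨m + 1, h⟩)
    (s : ℝ) (hs : s * s = 1) (x : Fin n → ℝ) (hx : x ≠ 0) :
    0 < ∑ i, r i * x i ^ 2 + (1 / 2) * ∑ i, ∑ j, b i j * (x i - s * x j) ^ 2 := by
  have hA : (0:ℝ) ≤ ∑ i, r i * x i ^ 2 :=
    Finset.sum_nonneg fun i _ => mul_nonneg (hr i) (sq_nonneg _)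
  have hBt : ∀ i j, (0:ℝ) ≤ b i j * (x i - s * x j) ^ 2 :=
    fun i j => mul_nonneg (hb i j) (sq_nonneg _)
  have hBin : ∀ i, (0:ℝ) ≤ ∑ j, b i j * (x i - s * x j) ^ 2 :=
    fun i => Finset.sum_nonneg fun j _ => hBt i j
  have hB : (0:ℝ) ≤ ∑ i, ∑ j, b i j * (x i - s * x j) ^ 2 :=
    Finset.sum_nonneg fun i _ => hBin i
  by_cases h0 : x ⟨0, hn⟩ = 0 ∧ ∀ (m : ℕ) (h : m + 1 < n), x ⟨m + 1, h⟩ = s * x ⟨m, by omega⟩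
  · exact absurd (vanish hn x s h0.1 h0.2) hx
  · rcases not_and_or.mp h0 with h1 | h2
    · have hterm : 0 < r ⟨0, hn⟩ * x ⟨0, hn⟩ ^ 2 :=
        mul_pos hr0 (pow_two_pos_of_ne_zero h1)
      have hle : r ⟨0, hn⟩ * x ⟨0, hn⟩ ^ 2 ≤ ∑ i, r i * x i ^ 2 :=
        Finset.single_le_sum (fun i _ => mul_nonneg (hr i) (sq_nonneg _)) (Finset.mem_univ _)
      linarith
    · push_neg at h2
      obtain ⟨m, h, hne⟩ := h2
      set im : Fin n := ⟨m, by omega⟩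
      set jm : Fin n := ⟨m + 1, h⟩
      have hdiff : x im - s * x jm ≠ 0 := by
        intro heq
        apply hne
        have hxim : x im = s * x jm := by linarith
        show x jm = s * x im
        rw [hxim]
        linear_combination (-(x jm)) * hs
      have hterm : 0 < b im jm * (x im - s * x jm) ^ 2 :=
        mul_pos (hb1 m h) (pow_two_pos_of_ne_zero hdiff)
      have hle1 : b im jm * (x im - s * x jm) ^ 2 ≤ ∑ j, b im j * (x im - s * x j) ^ 2 :=
        Finset.single_le_sum (fun j _ => hBt im j) (Finset.mem_univ _)
      have hle2 : ∑ j, b im j * (x im - s * x j) ^ 2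
          ≤ ∑ i, ∑ j, b i j * (x i - s * x j) ^ 2 :=
        Finset.single_le_sum (fun i (_ : i ∈ Finset.univ) => hBin i) (Finset.mem_univ im)
      linarith

lemma rsum_eq (α : ℝ) {n : ℕ} (i : Fin n) :
    ∑ j : Fin n, fracCoeff α ((i : ℤ) - (j : ℤ))
      = fracCoeff α 0 + (∑ k ∈ range i.val, fracCoeff α ((k : ℤ) + 1))
        + ∑ k ∈ range (n - 1 - i.val), fracCoeff α ((k : ℤ) + 1) := by
  have h1 : ∑ j : Fin n, fracCoeff α ((i : ℤ) - (j : ℤ))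
      = ∑ j ∈ range n, fracCoeff α ((i.val : ℤ) - (j : ℤ)) :=
    Fin.sum_univ_eq_sum_range (fun j => fracCoeff α ((i.val : ℤ) - (j : ℤ))) n
  have hin : i.val + 1 ≤ n := i.isLt
  rw [h1, ← Finset.sum_range_add_sum_Ico _ hin]
  have part1 : ∑ j ∈ range (i.val + 1), fracCoeff α ((i.val : ℤ) - (j : ℤ))
      = fracCoeff α 0 + ∑ k ∈ range i.val, fracCoeff α ((k : ℤ) + 1) := by
    have hrefl := Finset.sum_range_reflect (fun k : ℕ => fracCoeff α (k : ℤ)) (i.val + 1)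
    have e1 : ∑ j ∈ range (i.val + 1), fracCoeff α ((i.val : ℤ) - (j : ℤ))
        = ∑ j ∈ range (i.val + 1), fracCoeff α (((i.val + 1 - 1 - j : ℕ) : ℤ)) := by
      refine Finset.sum_congr rfl fun j hj => ?_
      have hj' : j ≤ i.val := by simpa [Nat.lt_succ_iff] using hj
      congr 1
      omega
    rw [e1, hrefl, Finset.sum_range_succ']
    have e2 : ∑ k ∈ range i.val, fracCoeff α (((k + 1 : ℕ) : ℤ))
        = ∑ k ∈ range i.val, fracCoeff α ((k : ℤ) + 1) := by
      refine Finset.sum_congr rfl fun k _ => ?_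
      norm_cast
    rw [e2]
    simp [add_comm]
  have part2 : ∑ j ∈ Finset.Ico (i.val + 1) n, fracCoeff α ((i.val : ℤ) - (j : ℤ))
      = ∑ k ∈ range (n - 1 - i.val), fracCoeff α ((k : ℤ) + 1) := by
    rw [Finset.sum_Ico_eq_sum_range]
    have en : n - (i.val + 1) = n - 1 - i.val := by omega
    rw [en]
    refine Finset.sum_congr rfl fun k _ => ?_
    rw [show ((i.val : ℤ) - ((i.val + 1 + k : ℕ) : ℤ)) = -((k : ℤ) + 1) by push_cast; ring,
      fracCoeff_neg]
  rw [part1, part2]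

lemma rsum_nonneg {α : ℝ} (hα1 : 1 < α) (hα2 : α ≤ 2) {n : ℕ} (i : Fin n) :
    0 ≤ ∑ j : Fin n, fracCoeff α ((i : ℤ) - (j : ℤ)) := by
  rw [rsum_eq]
  have h1 := sum_lb hα1 hα2 i.val
  have h2 := sum_lb hα1 hα2 (n - 1 - i.val)
  have h0 := fracCoeff_zero_pos (by linarith : (0:ℝ) < α)
  linarith

lemma rsum0_pos {α : ℝ} (hα1 : 1 < α) (hα2 : α ≤ 2) {n : ℕ} (hn : 0 < n) :
    0 < ∑ j : Fin n, fracCoeff α (((⟨0, hn⟩ : Fin n) : ℤ) - (j : ℤ)) := by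
  rw [rsum_eq]
  have h2 := sum_lb hα1 hα2 (n - 1 - (⟨0, hn⟩ : Fin n).val)
  have h0 := fracCoeff_zero_pos (by linarith : (0:ℝ) < α)
  simp only [Finset.range_zero, Finset.sum_empty]
  linarith

theorem stmt3 (α : ℝ) (hα1 : 1 < α) (hα2 : α ≤ 2) (M : ℕ) (hM : 2 ≤ M)
    (Cm : Matrix (Fin (M - 1)) (Fin (M - 1)) ℝ)
    (hC : ∀ i j, Cm i j = fracCoeff α ((i : ℤ) - (j : ℤ))) :
    ∀ lam : ℝ, lam ∈ spectrum ℝ Cm → 0 < lam ∧ lam < 2 * fracCoeff α 0 := by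
  intro lam hlam
  have hn : 0 < M - 1 := by omega
  rw [spectrum.mem_iff] at hlam
  have hdet : (algebraMap ℝ (Matrix (Fin (M - 1)) (Fin (M - 1)) ℝ) lam - Cm).det = 0 := by
    by_contra hd
    exact hlam ((Matrix.isUnit_iff_isUnit_det _).mpr (isUnit_iff_ne_zero.mpr hd))
  obtain ⟨v, hv0, hveq⟩ := (Matrix.exists_mulVec_eq_zero_iff).mpr hdet
  have hmul : Cm.mulVec v = lam • v := by
    rw [Matrix.sub_mulVec] at hveq
    have halg : (algebraMap ℝ (Matrix (Fin (M - 1)) (Fin (M - 1)) ℝ) lam).mulVec v = lam • v := by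
      rw [Algebra.algebraMap_eq_smul_one, Matrix.smul_mulVec, Matrix.one_mulVec]
    rw [halg] at hveq
    exact (sub_eq_zero.mp hveq).symm
  have hsumpos : 0 < ∑ i, v i ^ 2 := by
    obtain ⟨i, hi⟩ := Function.ne_iff.mp hv0
    have h1 : v i ^ 2 ≤ ∑ i, v i ^ 2 :=
      Finset.single_le_sum (fun i _ => sq_nonneg (v i)) (Finset.mem_univ i)
    have h2 : 0 < v i ^ 2 := pow_two_pos_of_ne_zero hi
    linarith
  have hQ : ∑ i, ∑ j, Cm i j * v i * v j = lam * ∑ i, v i ^ 2 := by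
    calc ∑ i, ∑ j, Cm i j * v i * v j
        = ∑ i, v i * (Cm.mulVec v i) := by
          refine Finset.sum_congr rfl fun i _ => ?_
          rw [Matrix.mulVec, dotProduct, Finset.mul_sum]
          exact Finset.sum_congr rfl fun j _ => by ring
      _ = ∑ i, v i * (lam * v i) := by
          rw [hmul]; exact Finset.sum_congr rfl fun i _ => by simp [smul_eq_mul]
      _ = lam * ∑ i, v i ^ 2 := by
          rw [Finset.mul_sum]; exact Finset.sum_congr rfl fun i _ => by ring
  have hsymm : ∀ i j, Cm i j = Cm j i := by
    intro i j
    rw [hC i j, hC j i, ← fracCoeff_neg α ((j : ℤ) - (i : ℤ))]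
    congr 1; ring
  have hr_def : ∀ i, (∑ j, Cm i j) = ∑ j : Fin (M - 1), fracCoeff α ((i : ℤ) - (j : ℤ)) :=
    fun i => Finset.sum_congr rfl fun j _ => hC i j
  have hr_nonneg : ∀ i, 0 ≤ ∑ j, Cm i j := fun i => by
    rw [hr_def]; exact rsum_nonneg hα1 hα2 i
  have hr0 : 0 < ∑ j, Cm ⟨0, hn⟩ j := by
    rw [hr_def]; exact rsum0_pos hα1 hα2 hn
  set b : Fin (M - 1) → Fin (M - 1) → ℝ := fun i j => if i = j then 0 else -(Cm i j)
    with hbdef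
  have hij_ne : ∀ i j : Fin (M - 1), i ≠ j → ((i : ℤ) - (j : ℤ)) ≠ 0 := by
    intro i j h h0
    apply h
    have : (i : ℤ) = (j : ℤ) := by omega
    exact Fin.ext (by exact_mod_cast this)
  have hb_nonneg : ∀ i j, 0 ≤ b i j := by
    intro i j
    by_cases h : i = j
    · simp [hbdef, h]
    · simp only [hbdef, if_neg h, neg_nonneg]
      rw [hC]
      exact fracCoeff_nonpos_int hα1 hα2 (hij_ne i j h)
  have hb1 : ∀ (m : ℕ) (h : m + 1 < M - 1), 0 < b ⟨m, by omega⟩ ⟨m + 1, h⟩ := by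
    intro m h
    have hne : (⟨m, by omega⟩ : Fin (M - 1)) ≠ ⟨m + 1, h⟩ := by
      simp [Fin.ext_iff]
    rw [hbdef]
    simp only [if_neg hne]
    rw [hC]
    have harg : (((⟨m, by omega⟩ : Fin (M - 1)) : ℤ) - ((⟨m + 1, h⟩ : Fin (M - 1)) : ℤ))
        = -1 := by
      simp only [Fin.val_mk]
      push_cast
      ring
    rw [harg]
    have := fracCoeff_one_neg' hα1
    linarith
  -- lower bound
  have hlow : 0 < lam * ∑ i, v i ^ 2 := by
    rw [← hQ]
    have hid := quad_id Cm hsymm v 1 (by norm_num)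
    have hbneg : ∑ i, ∑ j, Cm i j * (v i - 1 * v j) ^ 2
        = -∑ i, ∑ j, b i j * (v i - 1 * v j) ^ 2 := by
      rw [← Finset.sum_neg_distrib]
      refine Finset.sum_congr rfl fun i _ => ?_
      rw [← Finset.sum_neg_distrib]
      refine Finset.sum_congr rfl fun j _ => ?_
      by_cases h : i = j
      · subst h
        have hb0 : b i i = 0 := by simp [hbdef]
        rw [hb0]
        ring
      · simp [hbdef, if_neg h]
    have hpos := pos_form hn (fun i => ∑ j, Cm i j) b hr_nonneg hr0 hb_nonneg hb1
      1 (by norm_num) v hv0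
    rw [hid, hbneg]
    linarith
  -- upper bound
  have hupp : 0 < (2 * fracCoeff α 0 - lam) * ∑ i, v i ^ 2 := by
    have hid := quad_id Cm hsymm v (-1) (by norm_num)
    have hkey : ∑ i, ∑ j, Cm i j * (v i - (-1) * v j) ^ 2
        = (∑ i, 4 * fracCoeff α 0 * v i ^ 2)
          + -∑ i, ∑ j, b i j * (v i - (-1) * v j) ^ 2 := by
      rw [← Finset.sum_neg_distrib, ← Finset.sum_add_distrib]
      refine Finset.sum_congr rfl fun i _ => ?_
      rw [← Finset.sum_neg_distrib]
      have hdiag : (4 : ℝ) * fracCoeff α 0 * v i ^ 2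
          = ∑ j, (if i = j then 4 * fracCoeff α 0 * v i ^ 2 else 0) := by
        rw [Finset.sum_ite_eq]
        simp
      rw [hdiag, ← Finset.sum_add_distrib]
      refine Finset.sum_congr rfl fun j _ => ?_
      by_cases h : i = j
      · subst h
        have hb0 : b i i = 0 := by simp [hbdef]
        rw [hC, sub_self, hb0, if_pos rfl]
        ring
      · simp only [if_neg h, hbdef, zero_add]
        ring
    have hpos := pos_form hn (fun i => ∑ j, Cm i j) b hr_nonneg hr0 hb_nonneg hb1
      (-1) (by norm_num) v hv0
    have : ∑ i, (4 : ℝ) * fracCoeff α 0 * v i ^ 2 = 4 * fracCoeff α 0 * ∑ i, v i ^ 2 := by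
      rw [Finset.mul_sum]
    rw [this] at hkey
    have hQ' : ∑ i, ∑ j, Cm i j * v i * v j
        = -(∑ i, (∑ j, Cm i j) * v i ^ 2) + 2 * fracCoeff α 0 * ∑ i, v i ^ 2
          - (1 / 2) * ∑ i, ∑ j, b i j * (v i - (-1) * v j) ^ 2 := by
      rw [hid, hkey]; ring
    rw [hQ] at hQ'
    nlinarith [hpos]
  constructor
  · nlinarith [hsumpos, hlow]
  · nlinarith [hsumpos, hupp]
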